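/- Let φ, ψ : ℤ² → ℂ and α, β : ℤ² → ℝ satisfy, at every point (n,m) ∈ ℤ², the discrete Dirac equation φ(n,m+1) = α(n,m)·φ(n,m) + β(n,m)·ψ(n,m), ψ(n+1,m) = β(n,m)·φ(n,m) + α(n,m)·ψ(n,m), together with α(n,m)² − β(n,m)² = 1. Define F, G : ℤ² → ℝ³ by F(n,m) = (Re(φ(n,m)²), −Im(φ(n,m)²), |φ(n,m)|²) and G(n,m) = (Re(ψ(n,m)²), −Im(ψ(n,m)²), |ψ(n,m)|²). Then the consistency condition F(n,m+1) − F(n,m) = G(n+1,m) − G(n,m) holds for all (n,m) ∈ ℤ², so that F and G are the edge functions of a discrete surface X : ℤ² → ℝ³ (unique up to translation). -/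

import Mathlib

section DiracAux

variable {M : Type*} [AddCommGroup M]

private def intSum (f : ℤ → M) (n : ℤ) : M :=
  (∑ i ∈ Finset.range n.toNat, f i) - (∑ i ∈ Finset.range (-n).toNat, f (-(i + 1)))

private lemma intSum_zero (f : ℤ → M) : intSum f 0 = 0 := by simp [intSum]

private lemma intSum_step (f : ℤ → M) (n : ℤ) : intSum f (n + 1) = intSum f n + f n := by
  rcases le_or_gt 0 n with h | h
  · have h1 : (n + 1).toNat = n.toNat + 1 := by omega
    have h2 : (-(n + 1)).toNat = 0 := by omega
    have h3 : (-n).toNat = 0 := by omega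
    have h4 : (n.toNat : ℤ) = n := by omega
    rw [intSum, intSum, h1, h2, h3, Finset.sum_range_succ, h4]
    simp
  · have h1 : (n + 1).toNat = 0 := by omega
    have h2 : n.toNat = 0 := by omega
    have h3 : (-n).toNat = (-(n + 1)).toNat + 1 := by omega
    have h4 : -(((-(n + 1)).toNat : ℤ) + 1) = n := by omega
    rw [intSum, intSum, h1, h2, h3, Finset.sum_range_succ, h4]
    simp

private lemma intSum_sub (f g : ℤ → M) (n : ℤ) :
    intSum (fun k => f k - g k) n = intSum f n - intSum g n := by
  simp [intSum, Finset.sum_sub_distrib]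
  abel

private lemma intSum_telescope (h : ℤ → M) (m : ℤ) :
    intSum (fun l => h (l + 1) - h l) m = h m - h 0 := by
  induction m using Int.induction_on with
  | zero => simp [intSum_zero]
  | succ k ih => rw [intSum_step, ih]; abel
  | pred k ih =>
      have step := intSum_step (fun l => h (l + 1) - h l) (-(k+1))
      rw [show (-((k:ℤ)+1)+1) = -(k:ℤ) by ring] at step
      have h2 : intSum (fun l => h (l + 1) - h l) (-((k:ℤ)+1)) =
          intSum (fun l => h (l + 1) - h l) (-(k:ℤ))
            - (h (-(k:ℤ)) - h (-((k:ℤ)+1))) := by rw [step]; abel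
      rw [show (-(k:ℤ)-1) = -((k:ℤ)+1) by ring, h2, ih]
      abel

end DiracAux

/-- Solutions of the discrete Dirac equation in the ℝ^{2,1} case satisfy the
consistency condition, so the edge functions F, G integrate to a discrete surface
X : ℤ² → ℝ³ (unique up to translation). -/
theorem discrete_weierstrass_R21_consistency
    (φ ψ : ℤ × ℤ → ℂ) (α β : ℤ × ℤ → ℝ)
    (hφ : ∀ n m : ℤ, φ (n, m + 1) = (α (n, m) : ℂ) * φ (n, m) + (β (n, m) : ℂ) * ψ (n, m))
    (hψ : ∀ n m : ℤ, ψ (n + 1, m) = (β (n, m) : ℂ) * φ (n, m) + (α (n, m) : ℂ) * ψ (n, m))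
    (hαβ : ∀ n m : ℤ, (α (n, m)) ^ 2 - (β (n, m)) ^ 2 = 1)
    (F G : ℤ × ℤ → ℝ × ℝ × ℝ)
    (hF : ∀ n m : ℤ, F (n, m) =
      (((φ (n, m)) ^ 2).re, -((φ (n, m)) ^ 2).im, ‖φ (n, m)‖ ^ 2))
    (hG : ∀ n m : ℤ, G (n, m) =
      (((ψ (n, m)) ^ 2).re, -((ψ (n, m)) ^ 2).im, ‖ψ (n, m)‖ ^ 2)) :
    (∀ n m : ℤ, F (n, m + 1) - F (n, m) = G (n + 1, m) - G (n, m)) ∧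
    ∃ X : ℤ × ℤ → ℝ × ℝ × ℝ, ∀ n m : ℤ,
      F (n, m) = X (n + 1, m) - X (n, m) ∧ G (n, m) = X (n, m + 1) - X (n, m) := by
  have key : ∀ n m : ℤ, F (n, m + 1) - F (n, m) = G (n + 1, m) - G (n, m) := by
    intro n m
    have hab := hαβ n m
    rw [hF, hF, hG, hG, hφ, hψ]
    set a := α (n, m) with ha
    set b := β (n, m) with hb
    set p := φ (n, m)
    set q := ψ (n, m)
    have h1 : ((a : ℂ) * p + (b : ℂ) * q) ^ 2 - p ^ 2
        = ((b : ℂ) * p + (a : ℂ) * q) ^ 2 - q ^ 2 := by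
      have : ((a:ℂ)^2 - (b:ℂ)^2 : ℂ) = 1 := by
        exact_mod_cast hab
      linear_combination (p ^ 2 - q ^ 2) * this
    have h2 : ‖(a : ℂ) * p + (b : ℂ) * q‖ ^ 2 - ‖p‖ ^ 2
        = ‖(b : ℂ) * p + (a : ℂ) * q‖ ^ 2 - ‖q‖ ^ 2 := by
      rw [Complex.sq_norm, Complex.sq_norm, Complex.sq_norm, Complex.sq_norm]
      simp only [Complex.normSq_apply, Complex.add_re, Complex.add_im, Complex.mul_re,
        Complex.mul_im, Complex.ofReal_re, Complex.ofReal_im]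
      nlinarith [hab, sq_nonneg p.re, sq_nonneg q.re]
    have h1re : (((a : ℂ) * p + (b : ℂ) * q) ^ 2).re - (p ^ 2).re
        = (((b : ℂ) * p + (a : ℂ) * q) ^ 2).re - (q ^ 2).re := by
      rw [← Complex.sub_re, ← Complex.sub_re, h1]
    have h1im : (((a : ℂ) * p + (b : ℂ) * q) ^ 2).im - (p ^ 2).im
        = (((b : ℂ) * p + (a : ℂ) * q) ^ 2).im - (q ^ 2).im := by
      rw [← Complex.sub_im, ← Complex.sub_im, h1]
    refine Prod.ext ?_ (Prod.ext ?_ ?_) <;> simp only [Prod.fst_sub, Prod.snd_sub]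
    · exact h1re
    · linarith [h1im]
    · exact h2
  refine ⟨key, ?_⟩
  refine ⟨fun p => intSum (fun k => F (k, 0)) p.1 + intSum (fun l => G (p.1, l)) p.2, ?_⟩
  intro n m
  constructor
  · show F (n, m) = (intSum (fun k => F (k, 0)) (n + 1) + intSum (fun l => G (n + 1, l)) m)
      - (intSum (fun k => F (k, 0)) n + intSum (fun l => G (n, l)) m)
    rw [intSum_step]
    have : intSum (fun l => G (n + 1, l)) m - intSum (fun l => G (n, l)) m
        = intSum (fun l => G (n + 1, l) - G (n, l)) m := (intSum_sub _ _ m).symm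
    have htel : intSum (fun l => G (n + 1, l) - G (n, l)) m = F (n, m) - F (n, 0) := by
      have : (fun l => G (n + 1, l) - G (n, l)) = fun l => F (n, l + 1) - F (n, l) := by
        funext l; rw [key n l]
      rw [this]
      exact intSum_telescope (fun l => F (n, l)) m
    have goal : intSum (fun l => G (n + 1, l)) m - intSum (fun l => G (n, l)) m
        = F (n, m) - F (n, 0) := this.trans htel
    calc F (n, m) = F (n, 0) + (F (n, m) - F (n, 0)) := by abel
      _ = F (n, 0) + (intSum (fun l => G (n + 1, l)) m - intSum (fun l => G (n, l)) m) := by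
          rw [goal]
      _ = (intSum (fun k => F (k, 0)) n + F (n, 0) + intSum (fun l => G (n + 1, l)) m)
          - (intSum (fun k => F (k, 0)) n + intSum (fun l => G (n, l)) m) := by abel
  · show G (n, m) = (intSum (fun k => F (k, 0)) n + intSum (fun l => G (n, l)) (m + 1))
      - (intSum (fun k => F (k, 0)) n + intSum (fun l => G (n, l)) m)
    rw [intSum_step]
    abel
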